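/- The function p(β) = (1/(4π)) ∫_{−π}^{π} [(1 − 1/β)/(1 + 2 sin φ·β^{−1/2} + 1/β)] · exp(−c·(1 + 2 sin φ·β^{−1/2} + 1/β)) dφ, with c > 0 fixed, is decreasing in β for β > 1. -/

import Mathlib

open MeasureTheory Real intervalIntegral Metric Set


noncomputable def PEPu (b φ : ℝ) : ℝ := 1 + 2 * Real.sin φ * b + b ^ 2

noncomputable def PEPf (c b φ : ℝ) : ℝ :=
  (1 - b ^ 2) / PEPu b φ * Real.exp (-c * PEPu b φ)

noncomputable def PEPfb (c b φ : ℝ) : ℝ :=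
  Real.exp (-c * PEPu b φ) *
    ((-(2*b) * PEPu b φ - (1 - b^2) * (2 * Real.sin φ + 2*b)) / (PEPu b φ)^2
      - c * (1 - b^2) * (2 * Real.sin φ + 2*b) / PEPu b φ)

lemma PEPu_lb {b δ : ℝ} (hb0 : 0 ≤ b) (hδ0 : 0 ≤ δ) (hδ : δ ≤ 1 - b) (φ : ℝ) :
    δ^2 ≤ PEPu b φ := by
  have h1 := Real.neg_one_le_sin φ
  unfold PEPu
  nlinarith [mul_nonneg hb0 (by linarith : (0:ℝ) ≤ 1 + Real.sin φ)]

lemma PEPu_pos {b : ℝ} (hb0 : 0 < b) (hb1 : b < 1) (φ : ℝ) : 0 < PEPu b φ := by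
  have h1 := Real.neg_one_le_sin φ
  unfold PEPu
  nlinarith

lemma PEPu_le {b : ℝ} (hb0 : 0 ≤ b) (hb1 : b ≤ 1) (φ : ℝ) : PEPu b φ ≤ 4 := by
  have h2 := Real.sin_le_one φ
  unfold PEPu
  nlinarith

lemma PEPu_hasDerivAt_b (b φ : ℝ) :
    HasDerivAt (fun b => PEPu b φ) (2 * Real.sin φ + 2 * b) b := by
  have : HasDerivAt (fun b : ℝ => 1 + 2 * Real.sin φ * b + b ^ 2)
      (2 * Real.sin φ + 2 * b) b := by
    have h1 : HasDerivAt (fun b : ℝ => b) 1 b := hasDerivAt_id b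
    have h2 := ((h1.const_mul (2 * Real.sin φ)).const_add 1).add (h1.pow 2)
    convert h2 using 1
    any_goals rfl
    simp [mul_comm]
  exact this

lemma PEPu_hasDerivAt_phi (b φ : ℝ) :
    HasDerivAt (fun φ => PEPu b φ) (2 * Real.cos φ * b) φ := by
  have h2 := (((Real.hasDerivAt_sin φ).const_mul 2).mul_const b).const_add 1
  have h3 := h2.add_const (b ^ 2)
  exact h3

lemma PEPf_hasDerivAt (c b φ : ℝ) (hu : PEPu b φ ≠ 0) :
    HasDerivAt (fun b => PEPf c b φ) (PEPfb c b φ) b := by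
  have hu' := PEPu_hasDerivAt_b b φ
  have h1 : HasDerivAt (fun b : ℝ => 1 - b ^ 2) (-(2 * b)) b := by
    have := ((hasDerivAt_id b).pow 2).const_sub 1
    convert this using 1
    any_goals rfl
    simp [mul_comm]
  have hdiv := h1.div hu' hu
  have hexp := ((hu'.const_mul (-c)).exp)
  have := hdiv.mul hexp
  convert this using 1
  any_goals rfl
  unfold PEPfb
  simp only [Pi.div_apply, Pi.mul_apply]
  field_simp
  ring


noncomputable def PEPG (c b φ : ℝ) : ℝ :=
  2 * Real.exp (-c * PEPu b φ) * Real.cos φ / PEPu b φ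

/-- key polynomial identity -/
lemma PEP_poly (s k b c u : ℝ) (hu : u = 1 + 2*s*b + b^2) (hk : k^2 = 1 - s^2) :
    -(2*b)*u - (1-b^2)*(2*s+2*b) - c*(1-b^2)*(2*s+2*b)*u - 2*c*(b-s)*u^2
      = (-(4*c*b*k^2) - 2*s)*u - 4*k^2*b := by
  subst hu; rw [hk]; ring

lemma PEPG_hasDerivAt (c b φ : ℝ) (hu : PEPu b φ ≠ 0) :
    HasDerivAt (fun φ => PEPG c b φ)
      (PEPfb c b φ - 2*c*Real.exp (-c * PEPu b φ)*(b - Real.sin φ)) φ := by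
  have hud := PEPu_hasDerivAt_phi b φ
  have hexp := (hud.const_mul (-c)).exp
  have hnum := (hexp.const_mul 2).mul (Real.hasDerivAt_cos φ)
  have hdiv := hnum.div hud hu
  convert hdiv using 1
  any_goals rfl
  have hk : Real.cos φ ^ 2 = 1 - Real.sin φ ^ 2 := by
    nlinarith [Real.sin_sq_add_cos_sq φ]
  have key := PEP_poly (Real.sin φ) (Real.cos φ) b c (PEPu b φ) rfl hk
  unfold PEPfb
  simp only [Pi.mul_apply]
  set E := Real.exp (-c * PEPu b φ) with hE
  set u := PEPu b φ with hu'
  set s := Real.sin φ with hs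
  set k := Real.cos φ with hkk
  have hE0 : E ≠ 0 := Real.exp_ne_zero _
  field_simp
  linear_combination (1/2 : ℝ) * key


lemma PEPfb_bound {c δ x : ℝ} (hc : 0 < c) (hδ : 0 < δ) (hx0 : 0 < x)
    (hx1 : x ≤ 1 - δ) (φ : ℝ) : |PEPfb c x φ| ≤ 12/δ^4 + 4*c/δ^2 := by
  set s := Real.sin φ with hs
  set u := PEPu x φ with huu
  have hxle1 : x ≤ 1 := by linarith
  have hu2 : δ^2 ≤ u := PEPu_lb hx0.le hδ.le (by linarith) φ
  have hu0 : (0:ℝ) < u := lt_of_lt_of_le (by positivity) hu2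
  have hu4 : u ≤ 4 := PEPu_le hx0.le hxle1 φ
  have hs1 : -1 ≤ s := Real.neg_one_le_sin φ
  have hs2 : s ≤ 1 := Real.sin_le_one φ
  have hE : Real.exp (-c * u) ≤ 1 := by
    apply Real.exp_le_one_iff.mpr; nlinarith
  have hE0 : (0:ℝ) < Real.exp (-c * u) := Real.exp_pos _
  have hxu0 : 0 ≤ x * u := mul_nonneg hx0.le hu0.le
  have hxu : x * u ≤ 4 := by nlinarith [mul_nonneg (by linarith : (0:ℝ) ≤ 1 - x) hu0.le]
  have h1x0 : (0:ℝ) ≤ 1 - x^2 := by nlinarith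
  have h1x1 : 1 - x^2 ≤ 1 := by nlinarith
  have hsx1 : -4 ≤ 2*s+2*x := by linarith
  have hsx2 : 2*s+2*x ≤ 4 := by linarith
  have hP1 : (1-x^2)*(2*s+2*x) ≤ 4 := by nlinarith
  have hP2 : -4 ≤ (1-x^2)*(2*s+2*x) := by nlinarith
  have hA : |(-(2*x) * u - (1 - x^2) * (2 * s + 2*x))| ≤ 12 := by
    rw [abs_le]; constructor <;> nlinarith
  have hB : |c * (1 - x^2) * (2 * s + 2*x)| ≤ 4*c := by
    have : c * (1 - x^2) * (2 * s + 2*x) = c * ((1-x^2)*(2*s+2*x)) := by ring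
    rw [this, abs_le]; constructor <;> nlinarith
  have hu2' : δ^4 ≤ u^2 := by nlinarith
  calc |PEPfb c x φ|
      = Real.exp (-c*u) * |(-(2*x) * u - (1 - x^2) * (2 * s + 2*x))/u^2
          - c * (1 - x^2) * (2 * s + 2*x)/u| := by
        rw [PEPfb, abs_mul, abs_of_pos hE0]
    _ ≤ 1 * (|(-(2*x) * u - (1 - x^2) * (2 * s + 2*x))|/u^2
          + |c * (1 - x^2) * (2 * s + 2*x)|/u) := by
        apply mul_le_mul hE _ (abs_nonneg _) zero_le_one
        refine le_trans (abs_sub _ _) ?_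
        rw [abs_div, abs_div, abs_of_pos hu0, abs_of_pos (by positivity : (0:ℝ) < u^2)]
    _ ≤ 1 * (12/δ^4 + 4*c/δ^2) := by
        gcongr <;> positivity
    _ = 12/δ^4 + 4*c/δ^2 := one_mul _


lemma PEPu_cont (b : ℝ) : Continuous (fun φ => PEPu b φ) := by
  unfold PEPu; fun_prop

lemma PEPf_cont {b : ℝ} (c : ℝ) (hb0 : 0 < b) (hb1 : b < 1) :
    Continuous (fun φ => PEPf c b φ) := by
  have h := PEPu_cont b
  have hne : ∀ φ, PEPu b φ ≠ 0 := fun φ => (PEPu_pos hb0 hb1 φ).ne'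
  exact (continuous_const.div h hne).mul (Real.continuous_exp.comp (continuous_const.mul h))

lemma PEPfb_cont {b : ℝ} (c : ℝ) (hb0 : 0 < b) (hb1 : b < 1) :
    Continuous (fun φ => PEPfb c b φ) := by
  have h := PEPu_cont b
  have hne : ∀ φ, PEPu b φ ≠ 0 := fun φ => (PEPu_pos hb0 hb1 φ).ne'
  have hsin : Continuous fun φ : ℝ => 2 * Real.sin φ + 2*b := by fun_prop
  have t1 := (((continuous_const.mul h : Continuous fun φ => (-(2*b)) * PEPu b φ)).sub
    (continuous_const.mul hsin : Continuous fun φ => (1-b^2) * (2 * Real.sin φ + 2*b))).div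
    (h.pow 2) (fun φ => pow_ne_zero 2 (hne φ))
  have t2 := (continuous_const.mul hsin : Continuous fun φ => (c*(1-b^2)) * (2 * Real.sin φ + 2*b)).div h hne
  have hE : Continuous fun φ => Real.exp (-c * PEPu b φ) :=
    Real.continuous_exp.comp (continuous_const.mul h)
  exact hE.mul (t1.sub t2)

lemma PEP_r_cont {b : ℝ} (c : ℝ) : Continuous
    (fun φ => 2*c*Real.exp (-c * PEPu b φ)*(b - Real.sin φ)) := by
  have h := PEPu_cont b
  have hE : Continuous fun φ => Real.exp (-c * PEPu b φ) :=
    Real.continuous_exp.comp (continuous_const.mul h)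
  fun_prop

/-- the φ-integral of the total derivative part `∂_φ G` vanishes. -/
lemma PEP_G_integral (c : ℝ) {b : ℝ} (hb0 : 0 < b) (hb1 : b < 1) :
    ∫ φ in (-Real.pi)..Real.pi,
      (PEPfb c b φ - 2*c*Real.exp (-c * PEPu b φ)*(b - Real.sin φ)) = 0 := by
  have hne : ∀ φ, PEPu b φ ≠ 0 := fun φ => (PEPu_pos hb0 hb1 φ).ne'
  have hcont : Continuous (fun φ =>
      PEPfb c b φ - 2*c*Real.exp (-c * PEPu b φ)*(b - Real.sin φ)) :=
    (PEPfb_cont c hb0 hb1).sub (PEP_r_cont c)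
  rw [intervalIntegral.integral_eq_sub_of_hasDerivAt
    (fun φ _ => PEPG_hasDerivAt c b φ (hne φ))
    (hcont.intervalIntegrable _ _)]
  have : PEPu b Real.pi = PEPu b (-Real.pi) := by
    unfold PEPu; simp
  unfold PEPG
  rw [this]
  simp

lemma PEP_J_nonpos (c : ℝ) (hc : 0 < c) {b : ℝ} (hb0 : 0 < b) (hb1 : b < 1) :
    ∫ φ in (-Real.pi)..Real.pi, Real.exp (-c * PEPu b φ) * Real.sin φ ≤ 0 := by
  set h : ℝ → ℝ := fun φ => Real.exp (-c * PEPu b φ) * Real.sin φ with hh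
  have hcont : Continuous h := by
    have := PEPu_cont b
    fun_prop
  have hneg : (∫ φ in (-Real.pi)..Real.pi, h (-φ)) = ∫ φ in (-Real.pi)..Real.pi, h φ := by
    simpa using intervalIntegral.integral_comp_neg (a := -Real.pi) (b := Real.pi) h
  have hsplit : (∫ φ in (-Real.pi)..Real.pi, h φ) + (∫ φ in (-Real.pi)..Real.pi, h φ)
      = ∫ φ in (-Real.pi)..Real.pi, (h φ + h (-φ)) := by
    have hi2 : IntervalIntegrable (fun φ => h (-φ)) volume (-Real.pi) Real.pi :=
      (hcont.comp continuous_neg).intervalIntegrable _ _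
    rw [intervalIntegral.integral_add (hcont.intervalIntegrable _ _) hi2, hneg]
  have hpt : ∀ φ, h φ + h (-φ) ≤ 0 := by
    intro φ
    have hkey : h φ + h (-φ)
        = Real.sin φ * (Real.exp (-c * PEPu b φ) - Real.exp (-c * PEPu b (-φ))) := by
      simp only [hh, PEPu, Real.sin_neg]
      ring
    rw [hkey]
    rcases le_total 0 (Real.sin φ) with hs | hs
    · apply mul_nonpos_of_nonneg_of_nonpos hs
      rw [sub_nonpos, Real.exp_le_exp]
      unfold PEPu
      rw [Real.sin_neg]
      nlinarith [mul_nonneg (mul_nonneg hc.le hs) hb0.le]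
    · apply mul_nonpos_of_nonpos_of_nonneg hs
      rw [sub_nonneg, Real.exp_le_exp]
      unfold PEPu
      rw [Real.sin_neg]
      nlinarith [mul_nonneg (mul_nonneg hc.le (neg_nonneg.mpr hs)) hb0.le]
  have hle : (∫ φ in (-Real.pi)..Real.pi, (h φ + h (-φ))) ≤ 0 := by
    have h0 : (0:ℝ) ≤ ∫ φ in (-Real.pi)..Real.pi, -(h φ + h (-φ)) := by
      apply intervalIntegral.integral_nonneg (by linarith [Real.pi_pos])
      intro u _
      linarith [hpt u]
    rw [intervalIntegral.integral_neg] at h0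
    linarith
  linarith [hsplit ▸ hle]

lemma PEP_I_pos (c : ℝ) (hc : 0 < c) {b : ℝ} (hb0 : 0 < b) (hb1 : b < 1) :
    0 < ∫ φ in (-Real.pi)..Real.pi, Real.exp (-c * PEPu b φ) * (b - Real.sin φ) := by
  have hcu := PEPu_cont b
  have hE : Continuous fun φ => Real.exp (-c * PEPu b φ) :=
    Real.continuous_exp.comp (continuous_const.mul hcu)
  have hsplit : (∫ φ in (-Real.pi)..Real.pi, Real.exp (-c * PEPu b φ) * (b - Real.sin φ))
      = (∫ φ in (-Real.pi)..Real.pi, Real.exp (-c * PEPu b φ) * b)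
        - ∫ φ in (-Real.pi)..Real.pi, Real.exp (-c * PEPu b φ) * Real.sin φ := by
    rw [← intervalIntegral.integral_sub (f := fun φ => Real.exp (-c * PEPu b φ) * b) (g := fun φ => Real.exp (-c * PEPu b φ) * Real.sin φ) ((hE.mul continuous_const).intervalIntegrable _ _)
      ((hE.mul Real.continuous_sin).intervalIntegrable _ _)]
    congr 1; funext φ; ring
  have hpos : 0 < ∫ φ in (-Real.pi)..Real.pi, Real.exp (-c * PEPu b φ) * b := by
    apply intervalIntegral.intervalIntegral_pos_of_pos_on
      ((hE.mul continuous_const).intervalIntegrable _ _)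
    · intro x _
      exact mul_pos (Real.exp_pos _) hb0
    · linarith [Real.pi_pos]
  linarith [hsplit ▸ (by linarith [PEP_J_nonpos c hc hb0 hb1, hpos] :
    (0:ℝ) < (∫ φ in (-Real.pi)..Real.pi, Real.exp (-c * PEPu b φ) * b)
        - ∫ φ in (-Real.pi)..Real.pi, Real.exp (-c * PEPu b φ) * Real.sin φ)]


lemma PEP_int_fb_pos (c : ℝ) (hc : 0 < c) {b : ℝ} (hb0 : 0 < b) (hb1 : b < 1) :
    0 < ∫ φ in (-Real.pi)..Real.pi, PEPfb c b φ := by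
  have h1 : (∫ φ in (-Real.pi)..Real.pi, PEPfb c b φ)
      = (∫ φ in (-Real.pi)..Real.pi,
          (PEPfb c b φ - 2*c*Real.exp (-c * PEPu b φ)*(b - Real.sin φ)))
        + ∫ φ in (-Real.pi)..Real.pi,
            2*c*Real.exp (-c * PEPu b φ)*(b - Real.sin φ) := by
    rw [← intervalIntegral.integral_add (f := fun φ => PEPfb c b φ - 2*c*Real.exp (-c * PEPu b φ)*(b - Real.sin φ))
      (((PEPfb_cont c hb0 hb1).sub (PEP_r_cont c)).intervalIntegrable _ _)
      ((PEP_r_cont c).intervalIntegrable _ _)]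
    congr 1; funext φ; ring
  rw [h1, PEP_G_integral c hb0 hb1, zero_add]
  have h2 : (∫ φ in (-Real.pi)..Real.pi, 2*c*Real.exp (-c * PEPu b φ)*(b - Real.sin φ))
      = (2*c) * ∫ φ in (-Real.pi)..Real.pi, Real.exp (-c * PEPu b φ)*(b - Real.sin φ) := by
    rw [← intervalIntegral.integral_const_mul]
    congr 1; funext φ; ring
  rw [h2]
  exact mul_pos (by linarith) (PEP_I_pos c hc hb0 hb1)

lemma PEP_hasDerivAt_integral (c : ℝ) (hc : 0 < c) {b₀ : ℝ} (hb₀ : b₀ ∈ Set.Ioo (0:ℝ) 1) :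
    HasDerivAt (fun x => ∫ φ in (-Real.pi)..Real.pi, PEPf c x φ)
      (∫ φ in (-Real.pi)..Real.pi, PEPfb c b₀ φ) b₀ := by
  obtain ⟨hb0, hb1⟩ := hb₀
  set δ : ℝ := (1 - b₀)/2 with hδdef
  have hδ : 0 < δ := by simp only [hδdef]; linarith
  set ε : ℝ := min b₀ δ with hεdef
  have hε : 0 < ε := lt_min hb0 hδ
  have hball : ∀ x ∈ ball b₀ ε, 0 < x ∧ x ≤ 1 - δ := by
    intro x hx
    rw [mem_ball, Real.dist_eq, abs_lt] at hx
    have h1 : ε ≤ b₀ := min_le_left _ _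
    have h2 : ε ≤ δ := min_le_right _ _
    constructor
    · linarith [hx.1]
    · simp only [hδdef] at *
      linarith [hx.2]
  have hmeas : ∀ x : ℝ, AEStronglyMeasurable (fun φ => PEPf c x φ)
      (volume.restrict (Set.uIoc (-Real.pi) Real.pi)) := by
    intro x
    apply Measurable.aestronglyMeasurable
    unfold PEPf PEPu
    measurability
  have hres := intervalIntegral.hasDerivAt_integral_of_dominated_loc_of_deriv_le
    (F := fun x φ => PEPf c x φ) (F' := fun x φ => PEPfb c x φ)
    (bound := fun _ => 12/δ^4 + 4*c/δ^2) (a := -Real.pi) (b := Real.pi) (μ := volume)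
    (ball_mem_nhds b₀ hε)
    (Filter.Eventually.of_forall fun x => hmeas x)
    ((PEPf_cont c hb0 hb1).intervalIntegrable _ _)
    ((PEPfb_cont c hb0 hb1).aestronglyMeasurable.restrict)
    (Filter.Eventually.of_forall fun φ _ x hx => by
      obtain ⟨hx0, hx1⟩ := hball x hx
      simpa [Real.norm_eq_abs] using PEPfb_bound hc hδ hx0 hx1 φ)
    (intervalIntegrable_const)
    (Filter.Eventually.of_forall fun φ _ x hx => by
      obtain ⟨hx0, hx1⟩ := hball x hx
      exact PEPf_hasDerivAt c x φ (PEPu_pos hx0 (by linarith) φ).ne')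
  exact hres.2

noncomputable def PEPP (c : ℝ) : ℝ → ℝ := fun b =>
  (1 / (4 * Real.pi)) * ∫ φ in (-Real.pi)..Real.pi, PEPf c b φ

lemma PEPP_strictMono (c : ℝ) (hc : 0 < c) : StrictMonoOn (PEPP c) (Set.Ioo 0 1) := by
  have hderiv : ∀ b ∈ Set.Ioo (0:ℝ) 1, HasDerivAt (PEPP c)
      ((1 / (4 * Real.pi)) * ∫ φ in (-Real.pi)..Real.pi, PEPfb c b φ) b := by
    intro b hb
    exact (PEP_hasDerivAt_integral c hc hb).const_mul _
  apply strictMonoOn_of_deriv_pos (convex_Ioo 0 1)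
  · intro b hb
    exact (hderiv b hb).continuousAt.continuousWithinAt
  · intro b hb
    rw [interior_Ioo] at hb
    rw [(hderiv b hb).deriv]
    have := PEP_int_fb_pos c hc hb.1 hb.2
    have h4π : 0 < 4 * Real.pi := by linarith [Real.pi_pos]
    positivity

/-- The pairwise error probability expression
`p(β) = (1/(4π)) ∫_{−π}^{π} [(1 − 1/β)/(1 + 2 sin φ/√β + 1/β)]
  exp(−c (1 + 2 sin φ/√β + 1/β)) dφ`, with `c > 0` fixed, is (strictly)
decreasing in `β` on `β > 1`: a larger forward-to-backward gain ratio yields a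
smaller pairwise error probability. -/
theorem pairwise_error_strictAnti (c : ℝ) (hc : 0 < c) :
    StrictAntiOn (fun β : ℝ =>
      (1 / (4 * Real.pi)) * ∫ φ in (-Real.pi)..Real.pi,
        ((1 - 1 / β) / (1 + 2 * Real.sin φ / Real.sqrt β + 1 / β)) *
          Real.exp (-c * (1 + 2 * Real.sin φ / Real.sqrt β + 1 / β)))
      (Set.Ioi 1) := by
  have hval : ∀ β : ℝ, 1 < β →
      (1 / (4 * Real.pi)) * (∫ φ in (-Real.pi)..Real.pi,
        ((1 - 1 / β) / (1 + 2 * Real.sin φ / Real.sqrt β + 1 / β)) *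
          Real.exp (-c * (1 + 2 * Real.sin φ / Real.sqrt β + 1 / β)))
        = PEPP c (Real.sqrt β)⁻¹ := by
    intro β hβ
    have hβ0 : (0:ℝ) < β := by linarith
    have hsq : ((Real.sqrt β)⁻¹)^2 = 1/β := by
      rw [inv_pow, Real.sq_sqrt hβ0.le, one_div]
    have hs0 : 0 < Real.sqrt β := Real.sqrt_pos.mpr hβ0
    unfold PEPP
    congr 1
    apply intervalIntegral.integral_congr
    intro φ _
    unfold PEPf PEPu
    rw [hsq]
    rw [show 2 * Real.sin φ * (Real.sqrt β)⁻¹ = 2 * Real.sin φ / Real.sqrt β from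
      (div_eq_mul_inv _ _).symm]
  have hmem : ∀ β : ℝ, 1 < β → (Real.sqrt β)⁻¹ ∈ Set.Ioo (0:ℝ) 1 := by
    intro β hβ
    have hβ0 : (0:ℝ) < β := by linarith
    have h1 : 1 < Real.sqrt β := by
      rw [show (1:ℝ) = Real.sqrt 1 by simp]
      exact Real.sqrt_lt_sqrt (by norm_num) hβ
    constructor
    · positivity
    · rw [inv_lt_one_iff₀]; right; exact h1
  intro x hx y hy hxy
  simp only [Set.mem_Ioi] at hx hy
  have h1 : (Real.sqrt y)⁻¹ < (Real.sqrt x)⁻¹ := by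
    have hx0 : (0:ℝ) < x := by linarith
    have hsx : 0 < Real.sqrt x := Real.sqrt_pos.mpr hx0
    apply inv_strictAnti₀ hsx
    exact Real.sqrt_lt_sqrt hx0.le hxy
  calc (fun β : ℝ => (1 / (4 * Real.pi)) * ∫ φ in (-Real.pi)..Real.pi,
        ((1 - 1 / β) / (1 + 2 * Real.sin φ / Real.sqrt β + 1 / β)) *
          Real.exp (-c * (1 + 2 * Real.sin φ / Real.sqrt β + 1 / β))) y
      = PEPP c (Real.sqrt y)⁻¹ := hval y hy
    _ < PEPP c (Real.sqrt x)⁻¹ :=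
        PEPP_strictMono c hc (hmem y hy) (hmem x hx) h1
    _ = _ := (hval x hx).symm
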